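/- Suppose n > 1 and S ⊆ 𝔽₂^{2n} is a Sidon set of size 2ⁿ. If 6 · (e_max(S) − e_min(S)) ≤ 2ⁿ − 2, then S is a maximal Sidon set. -/
import Mathlib


/-- `S` is a Sidon set: no pairwise distinct `a, b, c, d` in `S` satisfy `a + b = c + d`. -/
def IsSidon {G : Type*} [AddCommGroup G] (S : Set G) : Prop :=
  ¬ ∃ a b c d : G, a ∈ S ∧ b ∈ S ∧ c ∈ S ∧ d ∈ S ∧
      a ≠ b ∧ a ≠ c ∧ a ≠ d ∧ b ≠ c ∧ b ≠ d ∧ c ≠ d ∧ a + b = c + d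

/-- The exclude multiplicity of `x` w.r.t. `S`: the number of 3-element subsets of `S`
whose elements sum to `x`. -/
def excMult {G : Type*} [AddCommGroup G] [DecidableEq G] (S : Finset G) (x : G) : ℕ :=
  ((S.powersetCard 3).filter (fun T => T.sum id = x)).card

/-- The exclude set of `S`: points outside `S` with positive exclude multiplicity. -/
def excSet {G : Type*} [AddCommGroup G] [DecidableEq G] [Fintype G] (S : Finset G) : Finset G :=
  (Finset.univ \ S).filter (fun x => 0 < excMult S x)

/-- `S` is a maximal Sidon set: a Sidon set not properly contained in any Sidon set. -/
def IsMaximalSidon {G : Type*} [AddCommGroup G] (S : Set G) : Prop :=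
  IsSidon S ∧ ∀ T : Set G, IsSidon T → S ⊆ T → T = S

lemma aux_three_sum_notMem {G : Type*} [AddCommGroup G] [DecidableEq G]
    (h2 : ∀ v : G, v + v = 0) {S : Finset G} (hS : IsSidon (S : Set G))
    {T : Finset G} (hT : T ∈ S.powersetCard 3) : T.sum id ∉ S := by
  rw [Finset.mem_powersetCard] at hT
  obtain ⟨hsub, hc⟩ := hT
  rw [Finset.card_eq_three] at hc
  obtain ⟨a, b, c, hab, hac, hbc, rfl⟩ := hc
  have ha : a ∈ S := hsub (by simp)
  have hb : b ∈ S := hsub (by simp)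
  have hcm : c ∈ S := hsub (by simp)
  have hsum : ({a, b, c} : Finset G).sum id = a + b + c := by
    rw [Finset.sum_insert (by simp [hab, hac]), Finset.sum_insert (by simp [hbc]),
      Finset.sum_singleton]
    simp [add_assoc]
  rw [hsum]
  intro hd
  set d := a + b + c with hdef
  have hda : d ≠ a := by
    intro h
    apply hbc
    have : a + (b + c) = a + 0 := by rw [add_zero]; rw [← add_assoc]; exact h
    have hbc0 : b + c = 0 := add_left_cancel this
    have : b + (c + c) = (b + c) + c := by abel
    rw [h2 c, add_zero, hbc0, zero_add] at this
    exact this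
  have hdb : d ≠ b := by
    intro h
    apply hac
    have : b + (a + c) = b + 0 := by rw [add_zero]; rw [show b + (a+c) = a + b + c by abel]; exact h
    have hac0 : a + c = 0 := add_left_cancel this
    have : a + (c + c) = (a + c) + c := by abel
    rw [h2 c, add_zero, hac0, zero_add] at this
    exact this
  have hdc : d ≠ c := by
    intro h
    apply hab
    have : c + (a + b) = c + 0 := by rw [add_zero]; rw [show c + (a+b) = a + b + c by abel]; exact h
    have hab0 : a + b = 0 := add_left_cancel this
    have : a + (b + b) = (a + b) + b := by abel
    rw [h2 b, add_zero, hab0, zero_add] at this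
    exact this
  apply hS
  refine ⟨a, b, c, d, ha, hb, hcm, hd, hab, hac, fun h => hda h.symm, hbc,
    fun h => hdb h.symm, fun h => hdc h.symm, ?_⟩
  have : c + d = (a + b) + (c + c) := by rw [hdef]; abel
  rw [h2 c, add_zero] at this
  rw [this]

lemma aux_maximal_of_pos {G : Type*} [AddCommGroup G] [DecidableEq G]
    (h2 : ∀ v : G, v + v = 0) {S : Finset G} (hS : IsSidon (S : Set G))
    (hpos : ∀ x ∉ S, 0 < excMult S x) : IsMaximalSidon (S : Set G) := by
  refine ⟨hS, fun T' hT' hsub => ?_⟩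
  apply Set.Subset.antisymm _ hsub
  intro t ht
  by_contra htS
  have htS' : t ∉ S := htS
  have := hpos t htS'
  rw [excMult, Finset.card_pos] at this
  obtain ⟨U, hU⟩ := this
  rw [Finset.mem_filter] at hU
  obtain ⟨hU1, hU2⟩ := hU
  rw [Finset.mem_powersetCard] at hU1
  obtain ⟨hsubU, hcU⟩ := hU1
  rw [Finset.card_eq_three] at hcU
  obtain ⟨a, b, c, hab, hac, hbc, rfl⟩ := hcU
  have hsum : a + b + c = t := by
    rw [← hU2, Finset.sum_insert (by simp [hab, hac]), Finset.sum_insert (by simp [hbc]),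
      Finset.sum_singleton]
    simp [add_assoc]
  have ha : a ∈ S := hsubU (by simp)
  have hb : b ∈ S := hsubU (by simp)
  have hcm : c ∈ S := hsubU (by simp)
  apply hT'
  refine ⟨a, b, c, t, hsub ha, hsub hb, hsub hcm, ht, hab, hac,
    fun h => htS' (h ▸ ha), hbc, fun h => htS' (h ▸ hb), fun h => htS' (h ▸ hcm), ?_⟩
  have : c + t = (a + b) + (c + c) := by rw [← hsum]; abel
  rw [h2 c, add_zero] at this
  rw [this]

/-- If `n > 1` and `S ⊆ 𝔽₂^{2n}` is a Sidon set of size `2ⁿ` with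
`6 · (e_max(S) − e_min(S)) ≤ 2ⁿ − 2`, then `S` is a maximal Sidon set. -/
theorem emax_sub_emin_small_implies_maximal (n : ℕ) (hn : 1 < n)
    (S : Finset (Fin (2 * n) → ZMod 2))
    (hS : IsSidon (S : Set (Fin (2 * n) → ZMod 2))) (hcard : S.card = 2 ^ n)
    (hbound : 6 * (sSup {k | ∃ x ∉ S, excMult S x = k} -
        sInf {k | ∃ x ∉ S, excMult S x = k}) ≤ 2 ^ n - 2) :
    IsMaximalSidon (S : Set (Fin (2 * n) → ZMod 2)) := by
  classical
  have h2 : ∀ v : Fin (2 * n) → ZMod 2, v + v = 0 := fun v =>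
    funext fun i => CharTwo.add_self_eq_zero (v i)
  apply aux_maximal_of_pos h2 hS
  by_contra hneg
  push_neg at hneg
  obtain ⟨x₀, hx₀S, hx₀⟩ := hneg
  have hx₀0 : excMult S x₀ = 0 := Nat.le_zero.mp hx₀
  -- the complement
  set M : Finset (Fin (2 * n) → ZMod 2) := Finset.univ \ S with hMdef
  have hx₀M : x₀ ∈ M := by simp [hMdef, hx₀S]
  have hcardG : Fintype.card (Fin (2 * n) → ZMod 2) = 2 ^ (2 * n) := by
    simp [ZMod.card]
  have hMcard : M.card = 2 ^ (2 * n) - 2 ^ n := by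
    rw [hMdef, Finset.card_sdiff_of_subset (Finset.subset_univ S), Finset.card_univ, hcardG, hcard]
  -- counting identity
  have hfiber : ∀ T ∈ S.powersetCard 3, T.sum id ∈ M := by
    intro T hT
    simp only [hMdef, Finset.mem_sdiff, Finset.mem_univ, true_and]
    exact aux_three_sum_notMem h2 hS hT
  have hsum : ∑ x ∈ M, excMult S x = (2 ^ n).choose 3 := by
    rw [← hcard, ← Finset.card_powersetCard 3 S]
    exact (Finset.card_eq_sum_card_fiberwise hfiber).symm
  -- sup/inf as finset max'/min'
  set E : Finset ℕ := M.image (excMult S) with hEdef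
  have hEne : E.Nonempty := ⟨excMult S x₀, Finset.mem_image_of_mem _ hx₀M⟩
  have hEset : {k | ∃ x ∉ S, excMult S x = k} = (↑E : Set ℕ) := by
    ext k
    simp only [Set.mem_setOf_eq, hEdef, Finset.coe_image, Set.mem_image, Finset.mem_coe,
      hMdef, Finset.mem_sdiff, Finset.mem_univ, true_and]
  have h0E : (0 : ℕ) ∈ E := by
    rw [hEdef]
    exact hx₀0 ▸ Finset.mem_image_of_mem _ hx₀M
  have hinf : sInf {k | ∃ x ∉ S, excMult S x = k} = 0 := by
    rw [hEset]
    exact Nat.sInf_eq_zero.mpr (Or.inl h0E)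
  have hsupE : sSup {k | ∃ x ∉ S, excMult S x = k} = E.max' hEne := by
    rw [hEset]
    exact hEne.csSup_eq_max'
  rw [hinf, hsupE, Nat.sub_zero] at hbound
  set e := E.max' hEne with hedef
  -- bound the sum
  have hbound2 : ∀ x ∈ M, excMult S x ≤ e := fun x hx =>
    Finset.le_max' E _ (Finset.mem_image_of_mem _ hx)
  have hsum_le : ∑ x ∈ M, excMult S x ≤ (M.card - 1) * e := by
    rw [← Finset.add_sum_erase M _ hx₀M, hx₀0, zero_add]
    calc ∑ x ∈ M.erase x₀, excMult S x ≤ (M.erase x₀).card * e :=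
          Finset.sum_le_card_nsmul _ _ e (fun x hx => hbound2 x (Finset.mem_of_mem_erase hx))
      _ = (M.card - 1) * e := by rw [Finset.card_erase_of_mem hx₀M]
  -- arithmetic
  set N := 2 ^ n with hNdef
  have hN4 : 4 ≤ N := by
    calc 4 = 2 ^ 2 := by norm_num
      _ ≤ 2 ^ n := Nat.pow_le_pow_right (by norm_num) hn
  have hchoose : 6 * N.choose 3 = (N - 2) * ((N - 1) * (N * 1)) := by
    have := Nat.descFactorial_eq_factorial_mul_choose N 3
    simp [Nat.descFactorial] at this
    have h6 : (6 : ℕ) = Nat.factorial 3 := by decide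
    rw [h6, ← this, mul_one]
  have hMN : M.card = N * (N - 1) := by
    rw [hMcard, two_mul, pow_add, Nat.mul_sub_one]
  have key : 6 * ((2:ℕ) ^ n).choose 3 ≤ (N - 2) * (M.card - 1) := by
    calc 6 * ((2:ℕ) ^ n).choose 3 = 6 * ∑ x ∈ M, excMult S x := by rw [hsum]
      _ ≤ 6 * ((M.card - 1) * e) := Nat.mul_le_mul_left 6 hsum_le
      _ = (6 * e) * (M.card - 1) := by ring
      _ ≤ (N - 2) * (M.card - 1) := Nat.mul_le_mul_right _ hbound
  rw [hchoose, hMN] at key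
  have hP1 : 1 ≤ N * (N - 1) := by
    have : 1 ≤ N := by omega
    exact Nat.one_le_iff_ne_zero.mpr (Nat.mul_ne_zero (by omega) (by omega))
  have hkey2 : (N - 1) * (N * 1) ≤ N * (N - 1) - 1 := by
    have h2pos : 0 < N - 2 := by omega
    exact Nat.le_of_mul_le_mul_left (by linarith [key]) h2pos
  rw [mul_one] at hkey2
  have : (N - 1) * N = N * (N - 1) := Nat.mul_comm _ _
  omega
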